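/- Every irreducible T-module W, viewed as a Q-module by restricting the action, is an irreducible Q-module. -/

import Mathlib

open Matrix BigOperators

noncomputable section

variable {X : Type*} [Fintype X] [DecidableEq X]

/-- The adjacency matrix of a graph, over ℂ. -/
def adjMat (G : SimpleGraph X) [DecidableRel G.Adj] : Matrix X X ℂ :=
  Matrix.of fun y z => if G.Adj y z then 1 else 0

/-- The dual idempotent `E*_i`: diagonal 0-1 matrix projecting onto
vertices at distance `i` from `x` (zero for `i` outside the distance range). -/
def Estar (G : SimpleGraph X) (x : X) (i : ℤ) : Matrix X X ℂ :=
  Matrix.diagonal fun y => if (G.dist x y : ℤ) = i then 1 else 0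

/-- The lowering matrix `L = Σ_{i=1}^D E*_{i-1} A E*_i`. -/
def lowerM (G : SimpleGraph X) [DecidableRel G.Adj] (x : X) (D : ℕ) : Matrix X X ℂ :=
  ∑ i ∈ Finset.Icc 1 D, Estar G x ((i : ℤ) - 1) * adjMat G * Estar G x i

/-- The flat matrix `F = Σ_{i=0}^D E*_i A E*_i`. -/
def flatM (G : SimpleGraph X) [DecidableRel G.Adj] (x : X) (D : ℕ) : Matrix X X ℂ :=
  ∑ i ∈ Finset.range (D + 1), Estar G x i * adjMat G * Estar G x i

/-- The raising matrix `R = Σ_{i=0}^{D-1} E*_{i+1} A E*_i`. -/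
def raiseM (G : SimpleGraph X) [DecidableRel G.Adj] (x : X) (D : ℕ) : Matrix X X ℂ :=
  ∑ i ∈ Finset.range D, Estar G x ((i : ℤ) + 1) * adjMat G * Estar G x i

/-- The subconstituent (Terwilliger) algebra `T`, generated by `A` and the `E*_i`. -/
def Talg (G : SimpleGraph X) [DecidableRel G.Adj] (x : X) (D : ℕ) :
    Subalgebra ℂ (Matrix X X ℂ) :=
  Algebra.adjoin ℂ (insert (adjMat G) (Estar G x '' Set.Icc (0 : ℤ) (D : ℤ)))

/-- The quantum adjacency algebra `Q`, generated by `L, F, R`. -/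
def Qalg (G : SimpleGraph X) [DecidableRel G.Adj] (x : X) (D : ℕ) :
    Subalgebra ℂ (Matrix X X ℂ) :=
  Algebra.adjoin ℂ {lowerM G x D, flatM G x D, raiseM G x D}

/-- The dual adjacency algebra `M*`, the span of the `E*_i`. -/
def Mstar (G : SimpleGraph X) (x : X) (D : ℕ) : Submodule ℂ (Matrix X X ℂ) :=
  Submodule.span ℂ (Estar G x '' Set.Icc (0 : ℤ) (D : ℤ))

/-- The graded component `T_n = Σ_i E*_{i+n} T E*_i`. -/
def Tgraded (G : SimpleGraph X) [DecidableRel G.Adj] (x : X) (D : ℕ) (n : ℤ) :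
    Submodule ℂ (Matrix X X ℂ) :=
  Submodule.span ℂ
    {M | ∃ i : ℤ, ∃ S ∈ Talg G x D, M = Estar G x (i + n) * S * Estar G x i}

/-- The graded component `Q_n = Q ∩ T_n`. -/
def Qgraded (G : SimpleGraph X) [DecidableRel G.Adj] (x : X) (D : ℕ) (n : ℤ) :
    Submodule ℂ (Matrix X X ℂ) :=
  (Subalgebra.toSubmodule (Qalg G x D)) ⊓ Tgraded G x D n

/-- `W` is an irreducible module for the algebra `A₀ ⊆ Mat_X(ℂ)` (acting on `V = ℂ^X`
by matrix-vector multiplication). -/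
def IsIrredMod (A₀ : Subalgebra ℂ (Matrix X X ℂ)) (W : Submodule ℂ (X → ℂ)) : Prop :=
  (∀ S ∈ A₀, ∀ w ∈ W, S.mulVec w ∈ W) ∧ W ≠ ⊥ ∧
    ∀ W' : Submodule ℂ (X → ℂ), W' ≤ W →
      (∀ S ∈ A₀, ∀ w ∈ W', S.mulVec w ∈ W') → W' = ⊥ ∨ W' = W

/-- The subspace `E*_i W`. -/
def Emap (G : SimpleGraph X) (x : X) (i : ℤ) (W : Submodule ℂ (X → ℂ)) :
    Submodule ℂ (X → ℂ) :=
  W.map (Estar G x i).mulVecLin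

/-- The subspace `P · W` spanned by all `S w`, `S ∈ P`, `w ∈ W`. -/
def actSp (P : Submodule ℂ (Matrix X X ℂ)) (W : Submodule ℂ (X → ℂ)) :
    Submodule ℂ (X → ℂ) :=
  Submodule.span ℂ {v | ∃ S ∈ P, ∃ w ∈ W, v = S.mulVec w}

/-- The statement: `W` has endpoint `r` and diameter `d`, i.e. `E*_i W ≠ 0`
iff `r ≤ i ≤ r + d`. -/
def HasEndpointDiam (G : SimpleGraph X) (x : X) (W : Submodule ℂ (X → ℂ))
    (r d : ℕ) : Prop :=
  ∀ i : ℤ, Emap G x i W ≠ ⊥ ↔ ((r : ℤ) ≤ i ∧ i ≤ (r : ℤ) + (d : ℤ))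

/-- `σ` restricts to an isomorphism of `Q`-modules from `U` to `W`. -/
def IsQIso (G : SimpleGraph X) [DecidableRel G.Adj] (x : X) (D : ℕ)
    (U W : Submodule ℂ (X → ℂ)) (σ : (X → ℂ) →ₗ[ℂ] (X → ℂ)) : Prop :=
  U.map σ = W ∧ (∀ u ∈ U, σ u = 0 → u = 0) ∧
    ∀ S ∈ Qalg G x D, ∀ u ∈ U, σ (S.mulVec u) = S.mulVec (σ u)

/-- `σ` restricts to an isomorphism of `T`-modules from `U` to `W`. -/
def IsTIso (G : SimpleGraph X) [DecidableRel G.Adj] (x : X) (D : ℕ)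
    (U W : Submodule ℂ (X → ℂ)) (σ : (X → ℂ) →ₗ[ℂ] (X → ℂ)) : Prop :=
  U.map σ = W ∧ (∀ u ∈ U, σ u = 0 → u = 0) ∧
    ∀ S ∈ Talg G x D, ∀ u ∈ U, σ (S.mulVec u) = S.mulVec (σ u)

/-- `σ` restricts to a quasi-isomorphism of `T`-modules from `U` to `W`,
with endpoint shift `n`. -/
def IsQuasiIso (G : SimpleGraph X) [DecidableRel G.Adj] (x : X) (D : ℕ)
    (U W : Submodule ℂ (X → ℂ)) (σ : (X → ℂ) →ₗ[ℂ] (X → ℂ)) (n : ℤ) : Prop :=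
  U.map σ = W ∧ (∀ u ∈ U, σ u = 0 → u = 0) ∧
    (∀ u ∈ U, σ ((lowerM G x D).mulVec u) = (lowerM G x D).mulVec (σ u)) ∧
    (∀ u ∈ U, σ ((flatM G x D).mulVec u) = (flatM G x D).mulVec (σ u)) ∧
    (∀ u ∈ U, σ ((raiseM G x D).mulVec u) = (raiseM G x D).mulVec (σ u)) ∧
    ∀ i : ℤ, ∀ u ∈ U, σ ((Estar G x i).mulVec u) = (Estar G x (i + n)).mulVec (σ u)

end
set_option linter.unusedSectionVars false
set_option maxHeartbeats 1000000

noncomputable section QTaux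
open Finset

variable {X : Type*} [Fintype X] [DecidableEq X]
variable (G : SimpleGraph X) [DecidableRel G.Adj] (x : X) (D : ℕ)

lemma Estar_conjT (i : ℤ) : (Estar G x i)ᴴ = Estar G x i := by
  ext y z
  by_cases hyz : y = z
  · subst hyz; simp [Estar, Matrix.conjTranspose_apply, apply_ite (star : ℂ → ℂ)]
  · simp [Estar, Matrix.conjTranspose_apply, Matrix.diagonal_apply_ne _ hyz,
      Matrix.diagonal_apply_ne' _ hyz]

lemma adjMat_conjT : (adjMat G)ᴴ = adjMat G := by
  ext y z
  simp [adjMat, Matrix.conjTranspose_apply, apply_ite (star : ℂ → ℂ), G.adj_comm]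

lemma Estar_mul (i j : ℤ) :
    Estar G x i * Estar G x j = if i = j then Estar G x i else 0 := by
  unfold Estar
  rw [Matrix.diagonal_mul_diagonal]
  split_ifs with h
  · subst h
    ext y z
    by_cases hyz : y = z
    · subst hyz
      by_cases h1 : ((G.dist x y : ℤ)) = i <;> simp [Matrix.diagonal_apply_eq, h1]
    · simp [Matrix.diagonal_apply_ne _ hyz]
  · ext y z
    by_cases hyz : y = z
    · subst hyz
      simp only [Matrix.diagonal_apply_eq, Matrix.zero_apply]
      split_ifs with h1 h2 <;> simp_all
    · simp [Matrix.diagonal_apply_ne _ hyz]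

lemma Estar_zero (hD : ∀ y, G.dist x y ≤ D) {i : ℤ} (h : i < 0 ∨ (D : ℤ) < i) :
    Estar G x i = 0 := by
  unfold Estar
  ext y z
  by_cases hyz : y = z
  · subst hyz
    have := hD y
    simp only [Matrix.diagonal_apply_eq, Matrix.zero_apply]
    rw [if_neg (by omega)]
  · simp [Matrix.diagonal_apply_ne _ hyz]

lemma sum_Estar (hD : ∀ y, G.dist x y ≤ D) {s : Finset ℤ}
    (hs : Finset.Icc (0 : ℤ) (D : ℤ) ⊆ s) :
    ∑ i ∈ s, Estar G x i = 1 := by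
  ext y z
  rw [Matrix.sum_apply]
  by_cases hyz : y = z
  · subst hyz
    have hmem : ((G.dist x y : ℤ)) ∈ s := hs (by simp [Finset.mem_Icc]; exact_mod_cast hD y)
    rw [Matrix.one_apply_eq]
    rw [Finset.sum_eq_single ((G.dist x y : ℤ))]
    · simp [Estar]
    · intro b _ hb
      simp [Estar, Matrix.diagonal_apply_eq, Ne.symm hb]
    · exact fun h => absurd hmem h
  · simp [Estar, Matrix.diagonal_apply_ne _ hyz, Matrix.one_apply_ne hyz]


lemma sum_ext_zero {β : Type*} [AddCommMonoid β] (f : ℤ → β) (s s' : Finset ℤ)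
    (h : ∀ j, f j ≠ 0 → j ∈ s ∩ s') : ∑ i ∈ s, f i = ∑ i ∈ s', f i := by
  classical
  have h1 : ∑ i ∈ s ∩ s', f i = ∑ i ∈ s, f i := by
    apply Finset.sum_subset Finset.inter_subset_left
    intro j _ hj'
    by_contra hf
    exact hj' (h j hf)
  have h2 : ∑ i ∈ s ∩ s', f i = ∑ i ∈ s', f i := by
    apply Finset.sum_subset Finset.inter_subset_right
    intro j _ hj'
    by_contra hf
    exact hj' (h j hf)
  rw [← h1, h2]

lemma dist_adj (hG : G.Connected) {y z : X} (h : G.Adj y z) :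
    G.dist x z ≤ G.dist x y + 1 := by
  have h1 : G.dist x z ≤ G.dist x y + G.dist y z := hG.dist_triangle
  have h2 : G.dist y z = 1 := SimpleGraph.dist_eq_one_iff_adj.mpr h
  omega

lemma EAE_zero (hG : G.Connected) {i j : ℤ} (h : j + 1 < i ∨ i + 1 < j) :
    Estar G x j * adjMat G * Estar G x i = 0 := by
  ext y z
  unfold Estar adjMat
  rw [Matrix.mul_diagonal, Matrix.diagonal_mul, Matrix.zero_apply, Matrix.of_apply]
  by_cases hadj : G.Adj y z
  · have h1 := dist_adj G x hG hadj
    have h2 := dist_adj G x hG hadj.symm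
    by_cases hy : ((G.dist x y : ℤ)) = j
    · by_cases hz : ((G.dist x z : ℤ)) = i
      · omega
      · simp [hz]
    · simp [hy]
  · simp [hadj]
lemma sum_int_of_range {β : Type*} [AddCommMonoid β] (f : ℤ → β) :
    ∑ i ∈ Finset.Icc (0 : ℤ) (D : ℤ), f i = ∑ i ∈ Finset.range (D + 1), f (i : ℤ) := by
  refine Finset.sum_nbij' (fun a => a.toNat) (fun a => (a : ℤ)) ?_ ?_ ?_ ?_ ?_
  · intro a ha; simp only [Finset.mem_Icc] at ha; simp only [Finset.mem_range]; omega
  · intro a ha; simp only [Finset.mem_range] at ha; simp only [Finset.mem_Icc]; omega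
  · intro a ha; simp only [Finset.mem_Icc] at ha; exact Int.toNat_of_nonneg ha.1
  · intro a ha; simp
  · intro a ha; simp only [Finset.mem_Icc] at ha
    congr 1; exact (Int.toNat_of_nonneg ha.1).symm

lemma lowerM_eq_sum (hD : ∀ y, G.dist x y ≤ D) :
    lowerM G x D =
      ∑ i ∈ Finset.range (D + 1), Estar G x ((i : ℤ) - 1) * adjMat G * Estar G x i := by
  unfold lowerM
  apply Finset.sum_subset
  · intro a ha; simp only [Finset.mem_Icc] at ha; simp only [Finset.mem_range]; omega
  · intro a ha ha'
    simp only [Finset.mem_range] at ha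
    simp only [Finset.mem_Icc] at ha'
    have ha0 : a = 0 := by omega
    subst ha0
    rw [show ((0 : ℕ) : ℤ) - 1 = (-1 : ℤ) by norm_num,
      Estar_zero G x D hD (by norm_num : (-1 : ℤ) < 0 ∨ _), Matrix.zero_mul, Matrix.zero_mul]

lemma raiseM_eq_sum (hD : ∀ y, G.dist x y ≤ D) :
    raiseM G x D =
      ∑ i ∈ Finset.range (D + 1), Estar G x ((i : ℤ) + 1) * adjMat G * Estar G x i := by
  unfold raiseM
  apply Finset.sum_subset
  · intro a ha; simp only [Finset.mem_range] at ha ⊢; omega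
  · intro a ha ha'
    simp only [Finset.mem_range] at ha ha'
    have ha0 : a = D := by omega
    rw [ha0]
    rw [Estar_zero G x D hD (by omega : ((D : ℤ) + 1 < 0 ∨ (D : ℤ) < (D : ℤ) + 1)),
      Matrix.zero_mul, Matrix.zero_mul]

lemma A_decomp (hG : G.Connected) (hD : ∀ y, G.dist x y ≤ D) :
    adjMat G = lowerM G x D + flatM G x D + raiseM G x D := by
  have hstep : adjMat G =
      ∑ i ∈ Finset.range (D + 1), (∑ j ∈ Finset.Icc (0 : ℤ) (D : ℤ),
        Estar G x j * adjMat G * Estar G x (i : ℤ)) := by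
    conv_lhs => rw [← one_mul (adjMat G)]
    rw [← sum_Estar G x D hD (le_refl _), Finset.sum_mul]
    have h1 : ∀ i : ℤ, Estar G x i * adjMat G =
        Estar G x i * adjMat G * 1 := by intro i; rw [mul_one]
    calc ∑ j ∈ Finset.Icc (0 : ℤ) (D : ℤ), Estar G x j * adjMat G
        = ∑ j ∈ Finset.Icc (0 : ℤ) (D : ℤ), Estar G x j * adjMat G *
            (∑ i ∈ Finset.range (D + 1), Estar G x (i : ℤ)) := by
          refine Finset.sum_congr rfl fun j _ => ?_
          rw [← sum_int_of_range D (fun i => Estar G x i), sum_Estar G x D hD (le_refl _), mul_one]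
      _ = ∑ j ∈ Finset.Icc (0 : ℤ) (D : ℤ), ∑ i ∈ Finset.range (D + 1),
            Estar G x j * adjMat G * Estar G x (i : ℤ) := by
          refine Finset.sum_congr rfl fun j _ => ?_
          rw [Finset.mul_sum]
      _ = ∑ i ∈ Finset.range (D + 1), ∑ j ∈ Finset.Icc (0 : ℤ) (D : ℤ),
            Estar G x j * adjMat G * Estar G x (i : ℤ) := Finset.sum_comm
  rw [hstep]
  have hinner : ∀ i : ℕ, i ∈ Finset.range (D + 1) →
      (∑ j ∈ Finset.Icc (0 : ℤ) (D : ℤ), Estar G x j * adjMat G * Estar G x (i : ℤ)) =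
        Estar G x ((i : ℤ) - 1) * adjMat G * Estar G x (i : ℤ)
        + Estar G x (i : ℤ) * adjMat G * Estar G x (i : ℤ)
        + Estar G x ((i : ℤ) + 1) * adjMat G * Estar G x (i : ℤ) := by
    intro i _
    rw [sum_ext_zero (fun j => Estar G x j * adjMat G * Estar G x (i : ℤ)) _
      ({(i : ℤ) - 1, (i : ℤ), (i : ℤ) + 1} : Finset ℤ) ?_]
    · rw [Finset.sum_insert (by simp only [Finset.mem_insert, Finset.mem_singleton]; omega), Finset.sum_insert (by simp only [Finset.mem_singleton]; omega),
        Finset.sum_singleton, add_assoc]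
    · intro j hj
      have hj1 : ¬ ((j : ℤ) + 1 < (i : ℤ) ∨ (i : ℤ) + 1 < j) := fun h =>
        hj (EAE_zero G x hG h)
      have hj2 : ¬ (j < 0 ∨ (D : ℤ) < j) := by
        intro h
        apply hj
        show Estar G x j * adjMat G * Estar G x (i : ℤ) = 0
        rw [Estar_zero G x D hD h, Matrix.zero_mul, Matrix.zero_mul]
      simp only [Finset.mem_inter, Finset.mem_Icc, Finset.mem_insert, Finset.mem_singleton]
      omega
  rw [Finset.sum_congr rfl hinner]
  rw [Finset.sum_add_distrib, Finset.sum_add_distrib]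
  rw [← lowerM_eq_sum G x D hD, ← raiseM_eq_sum G x D hD]
  rfl
lemma triple_left (a b j : ℤ) (M : Matrix X X ℂ) :
    Estar G x j * (Estar G x a * M * Estar G x b) =
      if j = a then Estar G x a * M * Estar G x b else 0 := by
  rw [← mul_assoc, ← mul_assoc, Estar_mul]
  split_ifs with h
  · rw [h]
  · rw [Matrix.zero_mul, Matrix.zero_mul]

lemma triple_right (a b j : ℤ) (M : Matrix X X ℂ) :
    (Estar G x a * M * Estar G x b) * Estar G x j =
      if b = j then Estar G x a * M * Estar G x b else 0 := by
  rw [mul_assoc, Estar_mul]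
  split_ifs with h
  · rfl
  · rw [Matrix.mul_zero]

lemma Estar_mul_lower (j : ℤ) :
    Estar G x j * lowerM G x D = lowerM G x D * Estar G x (j + 1) := by
  unfold lowerM
  rw [Finset.mul_sum, Finset.sum_mul]
  refine Finset.sum_congr rfl fun i _ => ?_
  rw [triple_left, triple_right]
  by_cases h : (i : ℤ) = j + 1
  · rw [if_pos (by omega), if_pos h]
  · rw [if_neg (by omega), if_neg h]

lemma Estar_mul_flat (j : ℤ) :
    Estar G x j * flatM G x D = flatM G x D * Estar G x j := by
  unfold flatM
  rw [Finset.mul_sum, Finset.sum_mul]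
  refine Finset.sum_congr rfl fun i _ => ?_
  rw [triple_left, triple_right]
  by_cases h : (i : ℤ) = j
  · rw [if_pos (by omega), if_pos h]
  · rw [if_neg (by omega), if_neg h]

lemma Estar_mul_raise (j : ℤ) :
    Estar G x j * raiseM G x D = raiseM G x D * Estar G x (j - 1) := by
  unfold raiseM
  rw [Finset.mul_sum, Finset.sum_mul]
  refine Finset.sum_congr rfl fun i _ => ?_
  rw [triple_left, triple_right]
  by_cases h : (i : ℤ) = j - 1
  · rw [if_pos (by omega), if_pos h]
  · rw [if_neg (by omega), if_neg h]

lemma Estar_mem_Talg (hD : ∀ y, G.dist x y ≤ D) (j : ℤ) :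
    Estar G x j ∈ Talg G x D := by
  by_cases h : 0 ≤ j ∧ j ≤ (D : ℤ)
  · exact Algebra.subset_adjoin (Set.mem_insert_of_mem _ ⟨j, ⟨h.1, h.2⟩, rfl⟩)
  · rw [Estar_zero G x D hD (by omega)]
    exact Subalgebra.zero_mem _

lemma adjMat_mem_Talg : adjMat G ∈ Talg G x D :=
  Algebra.subset_adjoin (Set.mem_insert _ _)

lemma lowerM_mem_Talg (hD : ∀ y, G.dist x y ≤ D) : lowerM G x D ∈ Talg G x D := by
  refine Subalgebra.sum_mem _ fun i _ => ?_
  exact Subalgebra.mul_mem _ (Subalgebra.mul_mem _ (Estar_mem_Talg G x D hD _)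
    (adjMat_mem_Talg G x D)) (Estar_mem_Talg G x D hD _)

lemma flatM_mem_Talg (hD : ∀ y, G.dist x y ≤ D) : flatM G x D ∈ Talg G x D := by
  refine Subalgebra.sum_mem _ fun i _ => ?_
  exact Subalgebra.mul_mem _ (Subalgebra.mul_mem _ (Estar_mem_Talg G x D hD _)
    (adjMat_mem_Talg G x D)) (Estar_mem_Talg G x D hD _)

lemma raiseM_mem_Talg (hD : ∀ y, G.dist x y ≤ D) : raiseM G x D ∈ Talg G x D := by
  refine Subalgebra.sum_mem _ fun i _ => ?_
  exact Subalgebra.mul_mem _ (Subalgebra.mul_mem _ (Estar_mem_Talg G x D hD _)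
    (adjMat_mem_Talg G x D)) (Estar_mem_Talg G x D hD _)

lemma Qalg_le_Talg (hD : ∀ y, G.dist x y ≤ D) : Qalg G x D ≤ Talg G x D := by
  apply Algebra.adjoin_le
  intro S hS
  rcases hS with h | h | h
  · rw [h]; exact lowerM_mem_Talg G x D hD
  · rw [h]; exact flatM_mem_Talg G x D hD
  · rw [Set.mem_singleton_iff.mp h]; exact raiseM_mem_Talg G x D hD

lemma lowerM_conjT : (lowerM G x D)ᴴ = raiseM G x D := by
  unfold lowerM raiseM
  rw [Matrix.conjTranspose_sum]
  refine Finset.sum_nbij' (fun a => a - 1) (fun a => a + 1) ?_ ?_ ?_ ?_ ?_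
  · intro a ha; simp only [Finset.mem_Icc] at ha; simp only [Finset.mem_range]; omega
  · intro a ha; simp only [Finset.mem_range] at ha; simp only [Finset.mem_Icc]; omega
  · intro a ha; simp only [Finset.mem_Icc] at ha; show a - 1 + 1 = a; omega
  · intro a ha; show a + 1 - 1 = a; omega
  · intro a ha
    simp only [Finset.mem_Icc] at ha
    rw [Matrix.conjTranspose_mul, Matrix.conjTranspose_mul, Estar_conjT, Estar_conjT,
      adjMat_conjT, mul_assoc]
    beta_reduce
    rw [show ((a - 1 : ℕ) : ℤ) + 1 = (a : ℤ) by omega,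
      show ((a - 1 : ℕ) : ℤ) = (a : ℤ) - 1 by omega]

lemma raiseM_conjT : (raiseM G x D)ᴴ = lowerM G x D := by
  rw [← lowerM_conjT G x D, Matrix.conjTranspose_conjTranspose]

lemma flatM_conjT : (flatM G x D)ᴴ = flatM G x D := by
  unfold flatM
  rw [Matrix.conjTranspose_sum]
  refine Finset.sum_congr rfl fun i _ => ?_
  rw [Matrix.conjTranspose_mul, Matrix.conjTranspose_mul, Estar_conjT,
    adjMat_conjT, mul_assoc]

lemma Qalg_star (S : Matrix X X ℂ) (hS : S ∈ Qalg G x D) : Sᴴ ∈ Qalg G x D := by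
  induction hS using Algebra.adjoin_induction with
  | mem y hy =>
    rcases hy with h | h | h
    · rw [h, lowerM_conjT]
      exact Algebra.subset_adjoin (by right; right; rfl)
    · rw [h, flatM_conjT]
      exact Algebra.subset_adjoin (by right; left; rfl)
    · rw [Set.mem_singleton_iff.mp h, raiseM_conjT]
      exact Algebra.subset_adjoin (by left; rfl)
  | algebraMap r =>
    rw [Algebra.algebraMap_eq_smul_one, Matrix.conjTranspose_smul, Matrix.conjTranspose_one]
    exact Subalgebra.smul_mem _ (Subalgebra.one_mem _) _
  | add a b ha hb iha ihb => rw [Matrix.conjTranspose_add]; exact Subalgebra.add_mem _ iha ihb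
  | mul a b ha hb iha ihb => rw [Matrix.conjTranspose_mul]; exact Subalgebra.mul_mem _ ihb iha
def Pcomp (M : Matrix X X ℂ) (n : ℤ) : Matrix X X ℂ :=
  ∑ i ∈ Finset.Icc (-1 : ℤ) ((D : ℤ) + 1), Estar G x (i + n) * M * Estar G x i

lemma Pcomp_eq_sum (hD : ∀ y, G.dist x y ≤ D) (M : Matrix X X ℂ) (n : ℤ) (s : Finset ℤ)
    (hs : ∀ j : ℤ, 0 ≤ j → j ≤ (D : ℤ) → 0 ≤ j + n → j + n ≤ (D : ℤ) → j ∈ s) :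
    ∑ i ∈ s, Estar G x (i + n) * M * Estar G x i = Pcomp G x D M n := by
  unfold Pcomp
  apply sum_ext_zero
  intro j hj
  have h1 : ¬ (j < 0 ∨ (D : ℤ) < j) := by
    intro h
    exact hj (by rw [Estar_zero G x D hD h, Matrix.mul_zero])
  have h2 : ¬ (j + n < 0 ∨ (D : ℤ) < j + n) := by
    intro h
    exact hj (by rw [Estar_zero G x D hD h, Matrix.zero_mul, Matrix.zero_mul])
  rw [Finset.mem_inter, Finset.mem_Icc]
  exact ⟨hs j (by omega) (by omega) (by omega) (by omega), by omega, by omega⟩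

lemma Pcomp_shift (hD : ∀ y, G.dist x y ≤ D) (M : Matrix X X ℂ) (n c : ℤ)
    (hc : ∀ j : ℤ, 0 ≤ j → j ≤ (D : ℤ) → 0 ≤ j + n → j + n ≤ (D : ℤ) →
      (-1 + c ≤ j ∧ j ≤ (D : ℤ) + 1 + c)) :
    ∑ i ∈ Finset.Icc (-1 : ℤ) ((D : ℤ) + 1),
      Estar G x (i + c + n) * M * Estar G x (i + c) = Pcomp G x D M n := by
  have hmap : ∑ i ∈ Finset.Icc (-1 : ℤ) ((D : ℤ) + 1),
      Estar G x (i + c + n) * M * Estar G x (i + c) =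
      ∑ j ∈ (Finset.Icc (-1 : ℤ) ((D : ℤ) + 1)).map (addRightEmbedding c),
        Estar G x (j + n) * M * Estar G x j := by
    rw [Finset.sum_map]
    rfl
  rw [hmap, Finset.map_add_right_Icc]
  apply Pcomp_eq_sum G x D hD M n
  intro j h1 h2 h3 h4
  rw [Finset.mem_Icc]
  exact hc j h1 h2 h3 h4

lemma Estar_Pcomp (M : Matrix X X ℂ) (n j : ℤ) :
    Estar G x j * Pcomp G x D M n = Pcomp G x D M n * Estar G x (j - n) := by
  unfold Pcomp
  rw [Finset.mul_sum, Finset.sum_mul]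
  refine Finset.sum_congr rfl fun i _ => ?_
  rw [triple_left, triple_right]
  by_cases h : i = j - n
  · rw [if_pos (by omega), if_pos h]
  · rw [if_neg (by omega), if_neg h]

lemma conj_term (N : Matrix X X ℂ) (d : ℤ)
    (hN : ∀ a : ℤ, N * Estar G x a = Estar G x (a + d) * N)
    (M : Matrix X X ℂ) (hC : M * N = N * M) (i n : ℤ) :
    N * (Estar G x (i + n) * M * Estar G x i) =
      (Estar G x (i + d + n) * M * Estar G x (i + d)) * N := by
  rw [← mul_assoc, ← mul_assoc, hN (i + n), mul_assoc _ N M, ← hC,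
    mul_assoc, mul_assoc, hN i, ← mul_assoc, ← mul_assoc,
    show i + n + d = i + d + n by ring]

lemma Pcomp_comm (hD : ∀ y, G.dist x y ≤ D) (N : Matrix X X ℂ) (d : ℤ)
    (hN : ∀ a : ℤ, N * Estar G x a = Estar G x (a + d) * N)
    (hd : -1 ≤ d ∧ d ≤ 1)
    (M : Matrix X X ℂ) (n : ℤ) (hC : M * N = N * M) :
    N * Pcomp G x D M n = Pcomp G x D M n * N := by
  conv_lhs => rw [Pcomp, Finset.mul_sum]
  calc ∑ i ∈ Finset.Icc (-1 : ℤ) ((D : ℤ) + 1),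
        N * (Estar G x (i + n) * M * Estar G x i)
      = ∑ i ∈ Finset.Icc (-1 : ℤ) ((D : ℤ) + 1),
        (Estar G x (i + d + n) * M * Estar G x (i + d)) * N :=
      Finset.sum_congr rfl fun i _ => conj_term G x (N := N) d hN M hC i n
    _ = (∑ i ∈ Finset.Icc (-1 : ℤ) ((D : ℤ) + 1),
        Estar G x (i + d + n) * M * Estar G x (i + d)) * N := by rw [Finset.sum_mul]
    _ = Pcomp G x D M n * N := by
        rw [Pcomp_shift G x D hD M n d (fun j h1 h2 h3 h4 => by omega)]

lemma lower_Estar (a : ℤ) :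
    lowerM G x D * Estar G x a = Estar G x (a + (-1)) * lowerM G x D := by
  have h := Estar_mul_lower G x D (a - 1)
  rw [sub_add_cancel] at h
  rw [← h, show a + (-1) = a - 1 by ring]

lemma flat_Estar (a : ℤ) :
    flatM G x D * Estar G x a = Estar G x (a + 0) * flatM G x D := by
  rw [add_zero, ← Estar_mul_flat]

lemma raise_Estar (a : ℤ) :
    raiseM G x D * Estar G x a = Estar G x (a + 1) * raiseM G x D := by
  have h := Estar_mul_raise G x D (a + 1)
  rw [add_sub_cancel_right] at h
  rw [← h]

lemma Pcomp_conjT (hD : ∀ y, G.dist x y ≤ D) (M : Matrix X X ℂ) (hM : Mᴴ = M) (n : ℤ) :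
    (Pcomp G x D M n)ᴴ = Pcomp G x D M (-n) := by
  unfold Pcomp
  rw [Matrix.conjTranspose_sum]
  have hterm : ∀ i ∈ Finset.Icc (-1 : ℤ) ((D : ℤ) + 1),
      (Estar G x (i + n) * M * Estar G x i)ᴴ =
        Estar G x (i + n + -n) * M * Estar G x (i + n) := by
    intro i _
    rw [Matrix.conjTranspose_mul, Matrix.conjTranspose_mul, Estar_conjT, Estar_conjT, hM,
      mul_assoc, show i + n + -n = i by ring]
  rw [Finset.sum_congr rfl hterm]
  exact Pcomp_shift G x D hD M (-n) n (fun j h1 h2 h3 h4 => by omega)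

lemma Pcomp_total (hD : ∀ y, G.dist x y ≤ D) (M : Matrix X X ℂ) :
    ∑ n ∈ Finset.Icc (-(D : ℤ)) (D : ℤ), Pcomp G x D M n = M := by
  unfold Pcomp
  rw [Finset.sum_comm]
  have hstep : ∀ i ∈ Finset.Icc (-1 : ℤ) ((D : ℤ) + 1),
      ∑ n ∈ Finset.Icc (-(D : ℤ)) (D : ℤ), Estar G x (i + n) * M * Estar G x i =
        (∑ n ∈ Finset.Icc (-(D : ℤ)) (D : ℤ), Estar G x (i + n)) * M * Estar G x i := by
    intro i _
    rw [Finset.sum_mul, Finset.sum_mul]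
  rw [Finset.sum_congr rfl hstep]
  have hout : ∑ i ∈ Finset.Icc (-1 : ℤ) ((D : ℤ) + 1),
      (∑ n ∈ Finset.Icc (-(D : ℤ)) (D : ℤ), Estar G x (i + n)) * M * Estar G x i =
      ∑ i ∈ Finset.Icc (0 : ℤ) (D : ℤ),
      (∑ n ∈ Finset.Icc (-(D : ℤ)) (D : ℤ), Estar G x (i + n)) * M * Estar G x i := by
    apply sum_ext_zero
    intro j hj
    have h1 : ¬ (j < 0 ∨ (D : ℤ) < j) := by
      intro h
      exact hj (by rw [Estar_zero G x D hD h, Matrix.mul_zero])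
    rw [Finset.mem_inter, Finset.mem_Icc, Finset.mem_Icc]
    refine ⟨⟨by omega, by omega⟩, by omega, by omega⟩
  rw [hout]
  have hin : ∀ i ∈ Finset.Icc (0 : ℤ) (D : ℤ),
      (∑ n ∈ Finset.Icc (-(D : ℤ)) (D : ℤ), Estar G x (i + n)) * M * Estar G x i =
        M * Estar G x i := by
    intro i hi
    rw [Finset.mem_Icc] at hi
    have h1 : ∑ n ∈ Finset.Icc (-(D : ℤ)) (D : ℤ), Estar G x (i + n) = 1 := by
      have hmap : ∑ n ∈ Finset.Icc (-(D : ℤ)) (D : ℤ), Estar G x (i + n) =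
          ∑ j ∈ (Finset.Icc (-(D : ℤ)) (D : ℤ)).map (addRightEmbedding i),
            Estar G x j := by
        rw [Finset.sum_map]
        refine Finset.sum_congr rfl fun n _ => ?_
        rw [show addRightEmbedding i n = n + i from rfl, add_comm]
      rw [hmap, Finset.map_add_right_Icc]
      exact sum_Estar G x D hD (by rw [Finset.Icc_subset_Icc_iff (by omega)]; omega)
    rw [h1, one_mul]
  rw [Finset.sum_congr rfl hin, ← Finset.mul_sum, sum_Estar G x D hD (le_refl _), mul_one]
lemma dot_adjoint (M : Matrix X X ℂ) (u v : X → ℂ) :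
    dotProduct (star u) (M *ᵥ v) = dotProduct (star (Mᴴ *ᵥ u)) v := by
  rw [Matrix.star_mulVec, Matrix.conjTranspose_conjTranspose, Matrix.dotProduct_mulVec]

open scoped ComplexOrder in
lemma dot_cancel (v w : X → ℂ) (h : ∀ u : X → ℂ, dotProduct (star u) v =
    dotProduct (star u) w) : v = w := by
  have h2 : star (v - w) ⬝ᵥ (v - w) = 0 := by
    rw [dotProduct_sub, h (v - w), sub_self]
  have := dotProduct_star_self_eq_zero.mp h2
  rwa [sub_eq_zero] at this

lemma mulVec_ext (M N : Matrix X X ℂ) (h : ∀ v, M *ᵥ v = N *ᵥ v) : M = N := by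
  have : Matrix.toLin' M = Matrix.toLin' N := by
    apply LinearMap.ext
    intro v
    rw [Matrix.toLin'_apply, Matrix.toLin'_apply]
    exact h v
  exact Matrix.toLin'.injective this

lemma sum_mulVec {s : Finset ℤ} (f : ℤ → Matrix X X ℂ) (v : X → ℂ) :
    (∑ i ∈ s, f i) *ᵥ v = ∑ i ∈ s, f i *ᵥ v := by
  induction s using Finset.induction with
  | empty => simp [Matrix.zero_mulVec]
  | insert a s h ih =>
    rw [Finset.sum_insert h, Finset.sum_insert h, Matrix.add_mulVec, ih]
section Proj
open scoped InnerProductSpace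

variable (W' : Submodule ℂ (X → ℂ))

def toEuc : (X → ℂ) ≃ₗ[ℂ] EuclideanSpace ℂ X := (WithLp.linearEquiv 2 ℂ (X → ℂ)).symm

def projMat : Matrix X X ℂ :=
  LinearMap.toMatrix'
    (((toEuc (X := X)).symm.toLinearMap.comp
        ((W'.map (toEuc (X := X)).toLinearMap).subtype.comp
          (Submodule.orthogonalProjectionOnto (W'.map (toEuc (X := X)).toLinearMap) : _ →ₗ[ℂ] _))).comp
      (toEuc (X := X)).toLinearMap)

lemma projMat_mulVec (v : X → ℂ) :
    projMat W' *ᵥ v =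
      (toEuc (X := X)).symm ((Submodule.orthogonalProjectionOnto (W'.map (toEuc (X := X)).toLinearMap)
        ((toEuc (X := X)) v) : EuclideanSpace ℂ X)) := by
  rw [projMat, ← Matrix.toLin'_apply, Matrix.toLin'_toMatrix']
  rfl

lemma projMat_mem (v : X → ℂ) : projMat W' *ᵥ v ∈ W' := by
  rw [projMat_mulVec]
  have h := (Submodule.orthogonalProjectionOnto (W'.map (toEuc (X := X)).toLinearMap) ((toEuc (X := X)) v)).2
  rcases Submodule.mem_map.mp h with ⟨w, hw, hw2⟩
  rw [← hw2]
  simpa using hw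

lemma projMat_fix (w : X → ℂ) (hw : w ∈ W') : projMat W' *ᵥ w = w := by
  rw [projMat_mulVec]
  have hmem : (toEuc (X := X)) w ∈ W'.map (toEuc (X := X)).toLinearMap :=
    Submodule.mem_map_of_mem hw
  rw [Submodule.orthogonalProjectionOnto_mem_subspace_eq_self ⟨_, hmem⟩]
  simp

lemma projMat_sym (u v : X → ℂ) :
    dotProduct (star u) (projMat W' *ᵥ v) =
      dotProduct (star (projMat W' *ᵥ u)) v := by
  have key := Submodule.inner_starProjection_left_eq_right (W'.map (toEuc (X := X)).toLinearMap)
    ((toEuc (X := X)) u) ((toEuc (X := X)) v)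
  rw [projMat_mulVec, projMat_mulVec, dotProduct_comm, dotProduct_comm _ v]
  exact key.symm

lemma commute_Talg (C : Matrix X X ℂ)
    (hA : C * adjMat G = adjMat G * C)
    (hE : ∀ j : ℤ, C * Estar G x j = Estar G x j * C) :
    ∀ S ∈ Talg G x D, C * S = S * C := by
  intro S hS
  induction hS using Algebra.adjoin_induction with
  | mem y hy =>
    rcases Set.mem_insert_iff.mp hy with h | h
    · rw [h]; exact hA
    · obtain ⟨j, _, rfl⟩ := h
      exact hE j
  | algebraMap r => exact (Algebra.commutes r C).symm
  | add a b ha hb iha ihb => rw [mul_add, add_mul, iha, ihb]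
  | mul a b ha hb iha ihb => rw [← mul_assoc, iha, mul_assoc, ihb, mul_assoc]

lemma schur (W : Submodule ℂ (X → ℂ)) (hW : IsIrredMod (Talg G x D) W)
    (C : Matrix X X ℂ) (hCW : ∀ w ∈ W, C *ᵥ w ∈ W)
    (hCT : ∀ S ∈ Talg G x D, C * S = S * C) :
    ∃ μ : ℂ, ∀ w ∈ W, C *ᵥ w = μ • w := by
  haveI : Nontrivial ↥W := Submodule.nontrivial_iff_ne_bot.mpr hW.2.1
  let f : ↥W →ₗ[ℂ] ↥W := (Matrix.mulVecLin C).restrict hCW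
  obtain ⟨μ, hμ⟩ := Module.End.exists_eigenvalue f
  obtain ⟨v₀, hv₀⟩ := hμ.exists_hasEigenvector
  refine ⟨μ, ?_⟩
  set K : Submodule ℂ (X → ℂ) :=
    W ⊓ LinearMap.ker (Matrix.mulVecLin C - μ • LinearMap.id) with hK
  have hKmem : ∀ v, v ∈ K ↔ v ∈ W ∧ C *ᵥ v = μ • v := by
    intro v
    rw [hK, Submodule.mem_inf, LinearMap.mem_ker, LinearMap.sub_apply, LinearMap.smul_apply,
      LinearMap.id_apply, sub_eq_zero]
    rfl
  have hinv : ∀ S ∈ Talg G x D, ∀ w ∈ K, S *ᵥ w ∈ K := by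
    intro S hS w hw
    rw [hKmem] at hw ⊢
    refine ⟨hW.1 S hS w hw.1, ?_⟩
    rw [Matrix.mulVec_mulVec, hCT S hS, ← Matrix.mulVec_mulVec, hw.2, Matrix.mulVec_smul]
  have hv₀K : (v₀ : X → ℂ) ∈ K := by
    rw [hKmem]
    refine ⟨v₀.2, ?_⟩
    have h1 : C *ᵥ (v₀ : X → ℂ) = ((f v₀ : ↥W) : X → ℂ) :=
      (LinearMap.restrict_coe_apply (Matrix.mulVecLin C) hCW v₀).symm
    rw [h1, hv₀.apply_eq_smul]
    rfl
  rcases hW.2.2 K inf_le_left hinv with hbot | htop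
  · exfalso
    apply hv₀.2
    have : (v₀ : X → ℂ) = 0 := by
      rw [hbot] at hv₀K
      simpa using hv₀K
    exact Subtype.coe_injective (by simpa using this)
  · intro w hw
    have hwK : w ∈ K := htop ▸ hw
    exact ((hKmem w).mp hwK).2

lemma Estar_mulVec_mem (hD : ∀ y, G.dist x y ≤ D) (W : Submodule ℂ (X → ℂ))
    (hW1 : ∀ S ∈ Talg G x D, ∀ w ∈ W, S *ᵥ w ∈ W) (j : ℤ) (w : X → ℂ) (hw : w ∈ W) :
    Estar G x j *ᵥ w ∈ W :=
  hW1 _ (Estar_mem_Talg G x D hD j) w hw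

lemma Pcomp_mulVec_mem (hD : ∀ y, G.dist x y ≤ D) (W W' : Submodule ℂ (X → ℂ))
    (hW1 : ∀ S ∈ Talg G x D, ∀ w ∈ W, S *ᵥ w ∈ W) (hle : W' ≤ W)
    (P' : Matrix X X ℂ) (hP' : ∀ v, P' *ᵥ v ∈ W') (n : ℤ) (v : X → ℂ) :
    Pcomp G x D P' n *ᵥ v ∈ W := by
  rw [Pcomp, _root_.sum_mulVec]
  refine Submodule.sum_mem _ fun i _ => ?_
  rw [← Matrix.mulVec_mulVec, ← Matrix.mulVec_mulVec]
  exact Estar_mulVec_mem G x D hD W hW1 _ _ (hle (hP' _))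

open scoped ComplexOrder in
lemma star_dot_self_zero (v : X → ℂ) (h : dotProduct (star v) v = 0) : v = 0 :=
  dotProduct_star_self_eq_zero.mp h
end Proj
end QTaux
theorem stmt13 {X : Type*} [Fintype X] [DecidableEq X]
    (G : SimpleGraph X) [DecidableRel G.Adj] (hG : G.Connected) (x : X) (D : ℕ)
    (hD : ∀ y, G.dist x y ≤ D) (hD2 : ∃ y, G.dist x y = D)
    (W : Submodule ℂ (X → ℂ)) (hW : IsIrredMod (Talg G x D) W) :
    IsIrredMod (Qalg G x D) W := by
  classical
  have hQT := Qalg_le_Talg G x D hD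
  refine ⟨fun S hS w hw => hW.1 S (hQT hS) w hw, hW.2.1, ?_⟩
  intro W' hle hinv
  by_cases hbot : W' = ⊥
  · exact Or.inl hbot
  right
  set P' := projMat W' with hP'def
  have pa : ∀ v, P' *ᵥ v ∈ W' := projMat_mem W'
  have pb : ∀ w ∈ W', P' *ᵥ w = w := projMat_fix W'
  have pc : ∀ u v, dotProduct (star u) (P' *ᵥ v) =
      dotProduct (star (P' *ᵥ u)) v := projMat_sym W'
  -- P' is Hermitian
  have pH : P'ᴴ = P' := by
    apply mulVec_ext
    intro u
    apply dot_cancel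
    intro z
    calc dotProduct (star z) (P'ᴴ *ᵥ u)
        = dotProduct (star (P'ᴴᴴ *ᵥ z)) u := dot_adjoint P'ᴴ z u
      _ = dotProduct (star (P' *ᵥ z)) u := by
          rw [Matrix.conjTranspose_conjTranspose]
      _ = dotProduct (star z) (P' *ᵥ u) := (pc z u).symm
  -- P' commutes with every element of Q
  have hcommQ : ∀ S ∈ Qalg G x D, P' * S = S * P' := by
    intro S hS
    apply mulVec_ext
    intro v
    rw [← Matrix.mulVec_mulVec, ← Matrix.mulVec_mulVec]
    apply dot_cancel
    intro u
    have hSH : Sᴴ ∈ Qalg G x D := Qalg_star G x D S hS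
    calc dotProduct (star u) (P' *ᵥ (S *ᵥ v))
        = dotProduct (star (P' *ᵥ u)) (S *ᵥ v) := pc u _
      _ = dotProduct (star (Sᴴ *ᵥ (P' *ᵥ u))) v := dot_adjoint S _ v
      _ = dotProduct (star (P' *ᵥ (Sᴴ *ᵥ (P' *ᵥ u)))) v := by
          rw [pb _ (hinv Sᴴ hSH _ (pa u))]
      _ = dotProduct (star (Sᴴ *ᵥ (P' *ᵥ u))) (P' *ᵥ v) := (pc _ v).symm
      _ = dotProduct (star (P' *ᵥ u)) (S *ᵥ (P' *ᵥ v)) :=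
          (dot_adjoint S (P' *ᵥ u) (P' *ᵥ v)).symm
      _ = dotProduct (star u) (P' *ᵥ (S *ᵥ (P' *ᵥ v))) := (pc u _).symm
      _ = dotProduct (star u) (S *ᵥ (P' *ᵥ v)) := by
          rw [pb _ (hinv S hS _ (pa v))]
  have hLQ : lowerM G x D ∈ Qalg G x D :=
    Algebra.subset_adjoin (Set.mem_insert _ _)
  have hFQ : flatM G x D ∈ Qalg G x D :=
    Algebra.subset_adjoin (Set.mem_insert_of_mem _ (Set.mem_insert _ _))
  have hRQ : raiseM G x D ∈ Qalg G x D :=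
    Algebra.subset_adjoin (Set.mem_insert_of_mem _ (Set.mem_insert_of_mem _ rfl))
  -- the graded components of P' commute with L, F, R, A
  have hPnL : ∀ n : ℤ, lowerM G x D * Pcomp G x D P' n =
      Pcomp G x D P' n * lowerM G x D := fun n =>
    Pcomp_comm G x D hD (lowerM G x D) (-1) (lower_Estar G x D)
      ⟨by norm_num, by norm_num⟩ P' n (hcommQ _ hLQ)
  have hPnF : ∀ n : ℤ, flatM G x D * Pcomp G x D P' n =
      Pcomp G x D P' n * flatM G x D := fun n =>
    Pcomp_comm G x D hD (flatM G x D) 0 (flat_Estar G x D)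
      ⟨by norm_num, by norm_num⟩ P' n (hcommQ _ hFQ)
  have hPnR : ∀ n : ℤ, raiseM G x D * Pcomp G x D P' n =
      Pcomp G x D P' n * raiseM G x D := fun n =>
    Pcomp_comm G x D hD (raiseM G x D) 1 (raise_Estar G x D)
      ⟨by norm_num, by norm_num⟩ P' n (hcommQ _ hRQ)
  have hPnA : ∀ n : ℤ, adjMat G * Pcomp G x D P' n =
      Pcomp G x D P' n * adjMat G := by
    intro n
    rw [A_decomp G x D hG hD, add_mul, add_mul, mul_add, mul_add,
      hPnL n, hPnF n, hPnR n]
  -- occupied levels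
  set Occ : Finset ℤ := (Finset.Icc (0 : ℤ) (D : ℤ)).filter
    (fun j => ∃ w ∈ W, Estar G x j *ᵥ w ≠ 0) with hOccdef
  have hOccne : Occ.Nonempty := by
    obtain ⟨w0, hw0W, hw0⟩ := Submodule.ne_bot_iff W |>.mp hW.2.1
    have hex : ∃ j ∈ Finset.Icc (0 : ℤ) (D : ℤ), Estar G x j *ᵥ w0 ≠ 0 := by
      by_contra hcon
      push_neg at hcon
      apply hw0
      have h1 : w0 = (∑ j ∈ Finset.Icc (0 : ℤ) (D : ℤ), Estar G x j) *ᵥ w0 := by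
        rw [sum_Estar G x D hD (le_refl _), Matrix.one_mulVec]
      rw [h1, _root_.sum_mulVec]
      exact Finset.sum_eq_zero hcon
    obtain ⟨j, hj1, hj2⟩ := hex
    exact ⟨j, Finset.mem_filter.mpr ⟨hj1, by
      obtain ⟨w0', hw0'⟩ := Submodule.ne_bot_iff W |>.mp hW.2.1
      exact ⟨w0, hw0W, hj2⟩⟩⟩
  have habove : ∀ j : ℤ, Occ.max' hOccne < j → ∀ w ∈ W, Estar G x j *ᵥ w = 0 := by
    intro j hj w hw
    by_cases hjr : 0 ≤ j ∧ j ≤ (D : ℤ)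
    · by_contra hcon
      have hjO : j ∈ Occ := Finset.mem_filter.mpr ⟨Finset.mem_Icc.mpr hjr, ⟨w, hw, hcon⟩⟩
      exact absurd (Finset.le_max' Occ j hjO) (by omega)
    · rw [Estar_zero G x D hD (by omega), Matrix.zero_mulVec]
  have hbelow : ∀ j : ℤ, j < Occ.min' hOccne → ∀ w ∈ W, Estar G x j *ᵥ w = 0 := by
    intro j hj w hw
    by_cases hjr : 0 ≤ j ∧ j ≤ (D : ℤ)
    · by_contra hcon
      have hjO : j ∈ Occ := Finset.mem_filter.mpr ⟨Finset.mem_Icc.mpr hjr, ⟨w, hw, hcon⟩⟩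
      exact absurd (Finset.min'_le Occ j hjO) (by omega)
    · rw [Estar_zero G x D hD (by omega), Matrix.zero_mulVec]
  -- nonzero components kill W
  have hkey : ∀ n : ℤ, n ≠ 0 → ∀ w ∈ W, Pcomp G x D P' n *ᵥ w = 0 := by
    intro n hn
    -- find a nonzero u ∈ W with `Pcomp n *ᵥ u = 0`
    have mk : ∀ t0 : ℤ, t0 ∈ Occ → (∀ w ∈ W, Estar G x (t0 + n) *ᵥ w = 0) →
        ∃ u ∈ W, u ≠ 0 ∧ Pcomp G x D P' n *ᵥ u = 0 := by
      intro t0 ht0 hzero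
      obtain ⟨ht0I, wstar, hwW, hwne⟩ := Finset.mem_filter.mp ht0
      refine ⟨Estar G x t0 *ᵥ wstar,
        Estar_mulVec_mem G x D hD W hW.1 t0 wstar hwW, hwne, ?_⟩
      set u := Estar G x t0 *ᵥ wstar with hudef
      have hEu0 : Estar G x t0 *ᵥ u = u := by
        rw [hudef, Matrix.mulVec_mulVec, Estar_mul, if_pos rfl]
      have hEu : ∀ i : ℤ, i ≠ t0 → Estar G x i *ᵥ u = 0 := by
        intro i hi
        rw [hudef, Matrix.mulVec_mulVec, Estar_mul, if_neg hi, Matrix.zero_mulVec]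
      rw [Pcomp, _root_.sum_mulVec]
      apply Finset.sum_eq_zero
      intro i hi
      rw [← Matrix.mulVec_mulVec, ← Matrix.mulVec_mulVec]
      by_cases hit : i = t0
      · subst hit
        rw [hEu0]
        exact hzero _ (hle (pa u))
      · rw [hEu i hit, Matrix.mulVec_zero, Matrix.mulVec_zero]
    have hu : ∃ u ∈ W, u ≠ 0 ∧ Pcomp G x D P' n *ᵥ u = 0 := by
      rcases lt_or_gt_of_ne hn with hneg | hpos
      · exact mk (Occ.min' hOccne) (Occ.min'_mem hOccne)
          (fun w hw => hbelow _ (by omega) w hw)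
      · exact mk (Occ.max' hOccne) (Occ.max'_mem hOccne)
          (fun w hw => habove _ (by omega) w hw)
    obtain ⟨u, huW, hune, hPnu⟩ := hu
    -- Cn := Pcomp (-n) * Pcomp n commutes with T and kills u
    have hCnA : (Pcomp G x D P' (-n) * Pcomp G x D P' n) * adjMat G =
        adjMat G * (Pcomp G x D P' (-n) * Pcomp G x D P' n) := by
      rw [← mul_assoc, hPnA (-n), mul_assoc, ← hPnA n, ← mul_assoc]
    have hCnE : ∀ j : ℤ, (Pcomp G x D P' (-n) * Pcomp G x D P' n) *
        Estar G x j = Estar G x j *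
        (Pcomp G x D P' (-n) * Pcomp G x D P' n) := by
      intro j
      have h1 : Estar G x j * (Pcomp G x D P' (-n) * Pcomp G x D P' n) =
          (Pcomp G x D P' (-n) * Pcomp G x D P' n) * Estar G x j := by
        rw [← mul_assoc, Estar_Pcomp G x D P' (-n) j, mul_assoc,
          Estar_Pcomp G x D P' n (j - -n), show j - -n - n = j by ring, ← mul_assoc]
      exact h1.symm
    have hCnW : ∀ w ∈ W,
        (Pcomp G x D P' (-n) * Pcomp G x D P' n) *ᵥ w ∈ W := by
      intro w hw
      rw [← Matrix.mulVec_mulVec]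
      exact Pcomp_mulVec_mem G x D hD W W' hW.1 hle P' pa (-n) _
    obtain ⟨μ, hμ⟩ := schur G x D W hW
      (Pcomp G x D P' (-n) * Pcomp G x D P' n) hCnW
      (commute_Talg G x D _ hCnA hCnE)
    have hμ0 : μ = 0 := by
      have h1 := hμ u huW
      rw [← Matrix.mulVec_mulVec, hPnu, Matrix.mulVec_zero] at h1
      by_contra hμne
      exact hune ((smul_eq_zero.mp h1.symm).resolve_left hμne)
    intro w hw
    have hC0 : (Pcomp G x D P' (-n) * Pcomp G x D P' n) *ᵥ w = 0 := by
      rw [hμ w hw, hμ0, zero_smul]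
    have hH : (Pcomp G x D P' (-n))ᴴ = Pcomp G x D P' n := by
      rw [Pcomp_conjT G x D hD P' pH (-n), neg_neg]
    apply star_dot_self_zero
    calc dotProduct (star (Pcomp G x D P' n *ᵥ w))
          (Pcomp G x D P' n *ᵥ w)
        = dotProduct (star ((Pcomp G x D P' (-n))ᴴ *ᵥ w))
          (Pcomp G x D P' n *ᵥ w) := by rw [hH]
      _ = dotProduct (star w)
          (Pcomp G x D P' (-n) *ᵥ (Pcomp G x D P' n *ᵥ w)) :=
          (dot_adjoint _ w _).symm
      _ = dotProduct (star w)
          ((Pcomp G x D P' (-n) * Pcomp G x D P' n) *ᵥ w) := by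
          rw [Matrix.mulVec_mulVec]
      _ = 0 := by rw [hC0, dotProduct_zero]
  -- degree-zero component is a scalar on W
  have hC0E : ∀ j : ℤ, Pcomp G x D P' 0 * Estar G x j =
      Estar G x j * Pcomp G x D P' 0 := by
    intro j
    have h1 := Estar_Pcomp G x D P' 0 j
    rw [sub_zero] at h1
    exact h1.symm
  obtain ⟨lam, hlam⟩ := schur G x D W hW (Pcomp G x D P' 0)
    (fun w hw => Pcomp_mulVec_mem G x D hD W W' hW.1 hle P' pa 0 w)
    (commute_Talg G x D _ (hPnA 0).symm hC0E)
  have hdecomp : ∀ w ∈ W, P' *ᵥ w = lam • w := by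
    intro w hw
    have h1 : P' = ∑ n ∈ Finset.Icc (-(D : ℤ)) (D : ℤ), Pcomp G x D P' n :=
      (Pcomp_total G x D hD P').symm
    calc P' *ᵥ w
        = (∑ n ∈ Finset.Icc (-(D : ℤ)) (D : ℤ), Pcomp G x D P' n) *ᵥ w := by
          rw [← h1]
      _ = ∑ n ∈ Finset.Icc (-(D : ℤ)) (D : ℤ), Pcomp G x D P' n *ᵥ w :=
          _root_.sum_mulVec _ w
      _ = Pcomp G x D P' 0 *ᵥ w := by
          apply Finset.sum_eq_single
          · intro n _ hn
            exact hkey n hn w hw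
          · intro h0
            exact absurd (Finset.mem_Icc.mpr ⟨by omega, by omega⟩) h0
      _ = lam • w := hlam w hw
  obtain ⟨w0', hw0'W', hw0'ne⟩ := Submodule.ne_bot_iff W' |>.mp hbot
  have hfix : lam • w0' = w0' := by
    rw [← hdecomp w0' (hle hw0'W'), pb w0' hw0'W']
  have hlam1 : lam = 1 := by
    by_contra hcon
    apply hw0'ne
    have h2 : (lam - 1) • w0' = 0 := by
      rw [sub_smul, one_smul, hfix, sub_self]
    exact (smul_eq_zero.mp h2).resolve_left (by
      intro h3
      exact hcon (by linear_combination h3))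
  apply le_antisymm hle
  intro w hw
  have h4 := hdecomp w hw
  rw [hlam1, one_smul] at h4
  rw [← h4]
  exact pa w
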